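/- Let S be a standard tableau of shape (n−k,k) with associated crossingless matching m(S), and let Y_S be the associated component set. For every weight sequence w, the flag Φ(w) lies in Y_S if and only if w orients m(S). -/
import Mathlib


open Module

namespace Springer

/-- The nilpotent endomorphism `N` of `ℂ^n` with two Jordan blocks of sizes `n-k` and `k`:
the basis vectors `e 0, …, e (n-k-1)` are `p 1, …, p (n-k)` and
`e (n-k), …, e (n-1)` are `q 1, …, q k`; `N` shifts each block down by one. -/
def Nmap (n k : ℕ) : (Fin n → ℂ) →ₗ[ℂ] (Fin n → ℂ) where
  toFun x j := if h : j.val + 1 < n ∧ j.val + 1 ≠ n - k then x ⟨j.val + 1, h.1⟩ else 0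
  map_add' x y := by
    funext j
    by_cases h : j.val + 1 < n ∧ j.val + 1 ≠ n - k <;> simp [h]
  map_smul' c x := by
    funext j
    by_cases h : j.val + 1 < n ∧ j.val + 1 ≠ n - k <;> simp [h]

/-- `span (p 1, …, p t, q 1, …, q b)` inside `ℂ^n`. -/
noncomputable def spanPQ (n k t b : ℕ) : Submodule ℂ (Fin n → ℂ) :=
  Submodule.span ℂ {x | ∃ j : Fin n,
    ((j.val < t ∧ j.val < n - k) ∨ (n - k ≤ j.val ∧ j.val < n - k + b)) ∧ x = Pi.single j 1}

/-- `P = span (p 1, …, p (n-k))`. -/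
noncomputable def Pmod (n k : ℕ) : Submodule ℂ (Fin n → ℂ) := spanPQ n k (n - k) 0

/-- `Q = span (q 1, …, q k)`. -/
noncomputable def Qmod (n k : ℕ) : Submodule ℂ (Fin n → ℂ) := spanPQ n k 0 k

/-- The projection of `V` onto `Q` along `P`. -/
def projQ (n k : ℕ) : (Fin n → ℂ) →ₗ[ℂ] (Fin n → ℂ) where
  toFun x j := if n - k ≤ j.val then x j else 0
  map_add' x y := by
    funext j
    by_cases h : n - k ≤ j.val
    · simp only [Pi.add_apply, if_pos h]
    · simp only [Pi.add_apply, if_neg h, add_zero]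
  map_smul' c x := by
    funext j
    by_cases h : n - k ≤ j.val
    · simp only [Pi.smul_apply, smul_eq_mul, if_pos h, RingHom.id_apply]
    · simp only [Pi.smul_apply, smul_eq_mul, if_neg h, mul_zero, RingHom.id_apply]

/-- A complete `N`-invariant flag in `ℂ^n`: a chain `F 0 ⊆ ⋯ ⊆ F n` with `dim F i = i`
(thus `F 0 = 0` and `F n = V`) and `N (F (i+1)) ⊆ F i`. -/
def IsNFlag (n k : ℕ) (F : Fin (n + 1) → Submodule ℂ (Fin n → ℂ)) : Prop :=
  Monotone F ∧ (∀ i : Fin (n + 1), finrank ℂ (F i) = i.val) ∧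
    ∀ i : Fin n, Submodule.map (Nmap n k) (F i.succ) ≤ F i.castSucc

/-- A flag is torus fixed if each subspace is spanned by its intersections with `P` and `Q`. -/
def TorusFixed (n k : ℕ) (F : Fin (n + 1) → Submodule ℂ (Fin n → ℂ)) : Prop :=
  ∀ i, F i = (F i ⊓ Pmod n k) ⊔ (F i ⊓ Qmod n k)

/-- A weight sequence (row-strict tableau) of shape `(n-k, k)`:
`true` encodes `∨` and `false` encodes `∧`; there are exactly `k` symbols `∨`. -/
def IsWeightSeq (n k : ℕ) (w : Fin n → Bool) : Prop :=
  (Finset.univ.filter fun i => w i = true).card = k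

/-- `t i` = number of 1-based positions `≤ i` labelled `∧`. -/
def tcount (n : ℕ) (w : Fin n → Bool) (i : ℕ) : ℕ :=
  (Finset.univ.filter fun j : Fin n => j.val < i ∧ w j = false).card

/-- `b i` = number of 1-based positions `≤ i` labelled `∨`. -/
def bcount (n : ℕ) (w : Fin n → Bool) (i : ℕ) : ℕ :=
  (Finset.univ.filter fun j : Fin n => j.val < i ∧ w j = true).card

/-- The torus fixed flag `Φ(w)` attached to a weight sequence `w`:
`Φ(w) i = span (p 1, …, p (t i), q 1, …, q (b i))`. -/
noncomputable def PhiFlag (n k : ℕ) (w : Fin n → Bool) : Fin (n + 1) → Submodule ℂ (Fin n → ℂ) :=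
  fun i => spanPQ n k (tcount n w i.val) (bcount n w i.val)

/-- A crossingless matching on the points `1, …, n`: a set of cups `(i, j)` with
`1 ≤ i < j ≤ n`, pairwise disjoint, mutually non-crossing, and such that no unmatched
point (ray) lies strictly inside any cup. -/
structure CrossinglessMatching (n : ℕ) where
  cups : Finset (ℕ × ℕ)
  mem_range : ∀ p ∈ cups, 1 ≤ p.1 ∧ p.1 < p.2 ∧ p.2 ≤ n
  disjoint' : ∀ p ∈ cups, ∀ q ∈ cups, p ≠ q →
    p.1 ≠ q.1 ∧ p.1 ≠ q.2 ∧ p.2 ≠ q.1 ∧ p.2 ≠ q.2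
  noncross : ∀ p ∈ cups, ∀ q ∈ cups, ¬(p.1 < q.1 ∧ q.1 < p.2 ∧ p.2 < q.2)
  rays_outside : ∀ p ∈ cups, ∀ m : ℕ, p.1 < m → m < p.2 → ∃ q ∈ cups, m = q.1 ∨ m = q.2

/-- The point `m ∈ {1, …, n}` is matched (lies on a cup) in `C`. -/
def Matched (n : ℕ) (C : CrossinglessMatching n) (m : ℕ) : Prop :=
  ∃ p ∈ C.cups, m = p.1 ∨ m = p.2

/-- A standard tableau of shape `(n-k, k)`: a filling of the two-row Young diagram by
the numbers `1, …, n`, each used exactly once, with rows and columns strictly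
decreasing read from the top left. -/
structure StandardTableau (n k : ℕ) where
  top : Fin (n - k) → ℕ
  bot : Fin k → ℕ
  top_strict : ∀ i j : Fin (n - k), i < j → top j < top i
  bot_strict : ∀ i j : Fin k, i < j → bot j < bot i
  col_strict : ∀ (i : Fin (n - k)) (j : Fin k), i.val = j.val → bot j < top i
  mem_iff : ∀ m : ℕ, (1 ≤ m ∧ m ≤ n) ↔ ((∃ i, top i = m) ∨ (∃ j, bot j = m))
  top_ne_bot : ∀ (i : Fin (n - k)) (j : Fin k), top i ≠ bot j

/-- `C` is the crossingless matching `m(S)` associated with the standard tableau `S`: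
it has `k` cups and its left cup endpoints are exactly the bottom-row entries of `S`. -/
def IsMatchOf (n k : ℕ) (S : StandardTableau n k) (C : CrossinglessMatching n) : Prop :=
  C.cups.card = k ∧ ∀ m : ℕ, (∃ p ∈ C.cups, p.1 = m) ↔ ∃ j, S.bot j = m

/-- The weight sequence of a standard tableau: `∨` (i.e. `true`) exactly on the
bottom-row entries. -/
def tabWeight (n k : ℕ) (S : StandardTableau n k) : Fin n → Bool :=
  fun j => decide (∃ i, S.bot i = j.val + 1)

/-- The cup conditions cutting out `Y_S`: for every cup `(i, σ i)` of the matching,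
`N ^ δ i (F (σ i)) = F (i - 1)` where `δ i = (σ i - i + 1)/2`. -/
def CupCond (n k : ℕ) (C : CrossinglessMatching n)
    (F : Fin (n + 1) → Submodule ℂ (Fin n → ℂ)) : Prop :=
  ∀ p ∈ C.cups, ∀ (h1 : p.1 - 1 < n + 1) (h2 : p.2 < n + 1),
    Submodule.map ((Nmap n k) ^ ((p.2 - p.1 + 1) / 2)) (F ⟨p.2, h2⟩) = F ⟨p.1 - 1, h1⟩

/-- The ray conditions cutting out `Y_S` (for the weight sequence of `S`): for every
ray `m` of the matching, `F m = (N ^ b m)⁻¹ (range (N ^ (n - k - t m + b m)))`. -/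
def RayCond (n k : ℕ) (w : Fin n → Bool) (C : CrossinglessMatching n)
    (F : Fin (n + 1) → Submodule ℂ (Fin n → ℂ)) : Prop :=
  ∀ m : ℕ, 1 ≤ m → ∀ hm : m < n + 1, ¬ Matched n C m →
    F ⟨m, hm⟩ = Submodule.comap ((Nmap n k) ^ (bcount n w m))
      (LinearMap.range ((Nmap n k) ^ (n - k - tcount n w m + bcount n w m)))

/-- Membership in the (Spaltenstein–Vargas–Fung) component `Y_S`, where `C = m(S)`. -/
def InYS (n k : ℕ) (S : StandardTableau n k) (C : CrossinglessMatching n)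
    (F : Fin (n + 1) → Submodule ℂ (Fin n → ℂ)) : Prop :=
  IsNFlag n k F ∧ CupCond n k C F ∧ RayCond n k (tabWeight n k S) C F

/-- The weight sequence `v` orients the crossingless matching `C`: opposite labels at
the two endpoints of every cup, and `∧` at every ray. -/
def OrientsMatching (n : ℕ) (v : Fin n → Bool) (C : CrossinglessMatching n) : Prop :=
  (∀ p ∈ C.cups, ∀ (h1 : p.1 - 1 < n) (h2 : p.2 - 1 < n),
      v ⟨p.1 - 1, h1⟩ ≠ v ⟨p.2 - 1, h2⟩) ∧
  (∀ m : ℕ, 1 ≤ m → m ≤ n → ¬ Matched n C m → ∀ h : m - 1 < n, v ⟨m - 1, h⟩ = false)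

/-- `C` is the matching `m(w)` produced from the weight sequence `w` by repeatedly
joining a pair `i < j` with `w i = ∨`, `w j = ∧` and all points strictly between them
already matched, until no such pair remains. -/
def IsMw (n : ℕ) (w : Fin n → Bool) (C : CrossinglessMatching n) : Prop :=
  (∀ p ∈ C.cups, ∀ (h1 : p.1 - 1 < n) (h2 : p.2 - 1 < n),
      w ⟨p.1 - 1, h1⟩ = true ∧ w ⟨p.2 - 1, h2⟩ = false) ∧
  ¬ ∃ i j : ℕ, 1 ≤ i ∧ i < j ∧ j ≤ n ∧ ¬ Matched n C i ∧ ¬ Matched n C j ∧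
      (∀ h : i - 1 < n, w ⟨i - 1, h⟩ = true) ∧ (∀ h : j - 1 < n, w ⟨j - 1, h⟩ = false) ∧
      (∀ m : ℕ, i < m → m < j → Matched n C m)

/-- `Cw` is the completed matching `C(w)`: a crossingless matching with `k` cups
containing `m(w) = Cm` on whose every cup `w` puts opposite labels. -/
def IsCw (n k : ℕ) (w : Fin n → Bool) (Cm Cw : CrossinglessMatching n) : Prop :=
  Cm.cups ⊆ Cw.cups ∧ Cw.cups.card = k ∧
  ∀ p ∈ Cw.cups, ∀ (h1 : p.1 - 1 < n) (h2 : p.2 - 1 < n),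
    w ⟨p.1 - 1, h1⟩ ≠ w ⟨p.2 - 1, h2⟩

/-- Membership in the closed attracting set `St(w)`, where `S = S(w)` and `Cw = C(w)`:
a flag of `Y_{S(w)}` such that `F i = Φ(w) i` for every `i` with `w i = ∧` which is a
left cup endpoint of `C(w)`. -/
def InSt (n k : ℕ) (w : Fin n → Bool) (S : StandardTableau n k)
    (Cw : CrossinglessMatching n) (F : Fin (n + 1) → Submodule ℂ (Fin n → ℂ)) : Prop :=
  InYS n k S Cw F ∧
  ∀ i : ℕ, ∀ hi : i < n + 1, (∀ h : i - 1 < n, w ⟨i - 1, h⟩ = false) →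
    (∃ p ∈ Cw.cups, p.1 = i) → F ⟨i, hi⟩ = PhiFlag n k w ⟨i, hi⟩

/-- The generating relation of `∼_C`: `a ∼ σ(a+1)` whenever `a+1` is a left cup
endpoint of `C`. -/
def cupRel (n : ℕ) (C : CrossinglessMatching n) (a b : ℕ) : Prop :=
  ∃ p ∈ C.cups, p.1 = a + 1 ∧ p.2 = b

/-- The equivalence relation `∼_C` on `{0, 1, …, n}`. -/
def simRel (n : ℕ) (C : CrossinglessMatching n) : ℕ → ℕ → Prop :=
  Relation.EqvGen (cupRel n C)

/-- The equivalence relation `≈_{C,D}` on `{0, 1, …, n}` generated by `∼_C` and `∼_D`. -/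
def approxRel (n : ℕ) (C D : CrossinglessMatching n) : ℕ → ℕ → Prop :=
  Relation.EqvGen (fun a b => cupRel n C a b ∨ cupRel n D a b)

/-- Adjacency in the glued diagram `D̄C`: `i` and `j` are joined by a cup of `C` or of `D`. -/
def Adj (n : ℕ) (C D : CrossinglessMatching n) (i j : ℕ) : Prop :=
  (i, j) ∈ C.cups ∨ (j, i) ∈ C.cups ∨ (i, j) ∈ D.cups ∨ (j, i) ∈ D.cups

/-- Lying in the same connected component of the glued diagram `D̄C`. -/
def Conn (n : ℕ) (C D : CrossinglessMatching n) : ℕ → ℕ → Prop :=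
  Relation.EqvGen (Adj n C D)

/-- The component of `v` in the glued diagram is a circle: every vertex of the
component is matched both in `C` and in `D`. -/
def IsCircleComp (n : ℕ) (C D : CrossinglessMatching n) (v : ℕ) : Prop :=
  ∀ u, Conn n C D u v → Matched n C u ∧ Matched n D u

/-- `v` is the leftmost vertex of its connected component (circle or line) of the
glued diagram. -/
def IsLeftmost (n : ℕ) (C D : CrossinglessMatching n) (v : ℕ) : Prop :=
  1 ≤ v ∧ v ≤ n ∧ ∀ u, 1 ≤ u → Conn n C D u v → v ≤ u

/-- An orientation of the glued diagram `D̄C` (with `C = m(w)` and `D = m(w')`):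
a weight sequence assigning opposite labels to the endpoints of every cup of `C` and
of `D`, agreeing with `w` at every ray of `C` and with `w'` at every ray of `D`. -/
def OrientsGlued (n k : ℕ) (w w' : Fin n → Bool) (C D : CrossinglessMatching n)
    (v : Fin n → Bool) : Prop :=
  IsWeightSeq n k v ∧
  (∀ p ∈ C.cups, ∀ (h1 : p.1 - 1 < n) (h2 : p.2 - 1 < n),
      v ⟨p.1 - 1, h1⟩ ≠ v ⟨p.2 - 1, h2⟩) ∧
  (∀ p ∈ D.cups, ∀ (h1 : p.1 - 1 < n) (h2 : p.2 - 1 < n),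
      v ⟨p.1 - 1, h1⟩ ≠ v ⟨p.2 - 1, h2⟩) ∧
  (∀ i : Fin n, ¬ Matched n C (i.val + 1) → v i = w i) ∧
  (∀ i : Fin n, ¬ Matched n D (i.val + 1) → v i = w' i)

/-- The component of `v0` in the glued diagram is orientable: it admits a labeling of
its vertices by `∧, ∨`, opposite across every edge, agreeing with `w` at every vertex
which is a ray of `C` and with `w'` at every vertex which is a ray of `D`. -/
def ComponentOrientable (n : ℕ) (w w' : Fin n → Bool) (C D : CrossinglessMatching n)
    (v0 : ℕ) : Prop :=
  ∃ g : ℕ → Bool,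
    (∀ i j, Conn n C D i v0 → Adj n C D i j → g i ≠ g j) ∧
    (∀ i, Conn n C D i v0 → 1 ≤ i → i ≤ n → ¬ Matched n C i →
      ∀ h : i - 1 < n, g i = w ⟨i - 1, h⟩) ∧
    (∀ i, Conn n C D i v0 → 1 ≤ i → i ≤ n → ¬ Matched n D i →
      ∀ h : i - 1 < n, g i = w' ⟨i - 1, h⟩)

/-- A walk in the glued multigraph `D̄C` from `a` to `b`: a list of edges, each tagged
by `true` (an edge of `C`) or `false` (an edge of `D`), consecutively incident. -/
def IsGluedWalk (n : ℕ) (C D : CrossinglessMatching n) : ℕ → ℕ → List (Bool × ℕ × ℕ) → Prop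
  | a, b, [] => a = b
  | a, b, e :: es =>
      (if e.1 = true then (e.2.1, e.2.2) ∈ C.cups else (e.2.1, e.2.2) ∈ D.cups) ∧
      ((a = e.2.1 ∧ IsGluedWalk n C D e.2.2 b es) ∨ (a = e.2.2 ∧ IsGluedWalk n C D e.2.1 b es))

/-- The standard flag of `ℂ^n`. -/
noncomputable def stdFlag (n k : ℕ) : Fin (n + 1) → Submodule ℂ (Fin n → ℂ) :=
  fun i => spanPQ n k (min i.val (n - k)) (i.val - (n - k))


/-! ### Auxiliary development -/

/-- The arithmetic condition defining the coordinate set of `spanPQ`. -/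
def condPQ (n k t b m : ℕ) : Prop :=
  (m < t ∧ m < n - k) ∨ (n - k ≤ m ∧ m < n - k + b)

instance (n k t b m : ℕ) : Decidable (condPQ n k t b m) := by
  unfold condPQ; infer_instance

lemma mem_spanPQ {n k t b : ℕ} {x : Fin n → ℂ} :
    x ∈ spanPQ n k t b ↔ ∀ j : Fin n, ¬ condPQ n k t b j.val → x j = 0 := by
  constructor
  · intro hx
    let K : Submodule ℂ (Fin n → ℂ) :=
      { carrier := {y | ∀ j : Fin n, ¬ condPQ n k t b j.val → y j = 0}
        add_mem' := by intro a b ha hb j hj; simp [ha j hj, hb j hj]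
        zero_mem' := by intro j hj; simp
        smul_mem' := by intro c a ha j hj; simp [ha j hj] }
    have : spanPQ n k t b ≤ K := by
      apply Submodule.span_le.2
      rintro y ⟨j, hj, rfl⟩ j' hj'
      have : j' ≠ j := by rintro rfl; exact hj' hj
      exact Pi.single_eq_of_ne this 1
    exact this hx
  · intro hx
    have hsum : x = ∑ j : Fin n, x j • (Pi.single j 1 : Fin n → ℂ) := by
      funext m
      rw [Finset.sum_apply]
      simp [Pi.single_apply]
    rw [hsum]
    apply Submodule.sum_mem
    intro j _
    by_cases hj : condPQ n k t b j.val
    · exact Submodule.smul_mem _ _ (Submodule.subset_span ⟨j, hj, rfl⟩)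
    · rw [hx j hj]; simp

lemma single_mem_spanPQ {n k t b : ℕ} {j : Fin n} :
    Pi.single j (1 : ℂ) ∈ spanPQ n k t b ↔ condPQ n k t b j.val := by
  constructor
  · intro h
    by_contra hc
    have := mem_spanPQ.1 h j hc
    simp at this
  · intro h; exact Submodule.subset_span ⟨j, h, rfl⟩

lemma spanPQ_mono {n k t b t' b' : ℕ} (ht : t ≤ t') (hb : b ≤ b') :
    spanPQ n k t b ≤ spanPQ n k t' b' := by
  intro x hx
  rw [mem_spanPQ] at hx ⊢
  intro j hj
  apply hx
  unfold condPQ at hj ⊢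
  omega

lemma spanPQ_eq_iff {n k t b t' b' : ℕ} (ht : t ≤ n - k) (hb : b ≤ k) (hk : k ≤ n)
    (ht' : t' ≤ n - k) (hb' : b' ≤ k) :
    spanPQ n k t b = spanPQ n k t' b' ↔ (t = t' ∧ b = b') := by
  constructor
  · intro h
    have key : ∀ m : ℕ, m < n → (condPQ n k t b m ↔ condPQ n k t' b' m) := by
      intro m hm
      constructor
      · intro hc
        have h1 : Pi.single (⟨m, hm⟩ : Fin n) (1:ℂ) ∈ spanPQ n k t b := single_mem_spanPQ.2 hc
        rw [h] at h1
        exact single_mem_spanPQ.1 h1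
      · intro hc
        have h1 : Pi.single (⟨m, hm⟩ : Fin n) (1:ℂ) ∈ spanPQ n k t' b' := single_mem_spanPQ.2 hc
        rw [← h] at h1
        exact single_mem_spanPQ.1 h1
    constructor
    · by_contra hne
      rcases Nat.lt_or_ge t t' with hlt | hge
      · have := key t (by omega)
        unfold condPQ at this
        omega
      · have hlt : t' < t := by omega
        have := key t' (by omega)
        unfold condPQ at this
        omega
    · by_contra hne
      rcases Nat.lt_or_ge b b' with hlt | hge
      · have := key (n - k + b) (by omega)
        unfold condPQ at this
        omega
      · have hlt : b' < b := by omega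
        have := key (n - k + b') (by omega)
        unfold condPQ at this
        omega
  · rintro ⟨rfl, rfl⟩; rfl

/-- Pointwise formula for `Nmap`. -/
lemma Nmap_apply {n k : ℕ} (x : Fin n → ℂ) (j : Fin n) :
    Nmap n k x j = if h : j.val + 1 < n ∧ j.val + 1 ≠ n - k then x ⟨j.val + 1, h.1⟩ else 0 := rfl

/-- The path condition: starting at `m`, applying `N` `d` times reads coordinate `m + d`. -/
def pathCond (n k d m : ℕ) : Prop := m + d < n - k ∨ (n - k ≤ m ∧ m + d < n)

instance (n k d m : ℕ) : Decidable (pathCond n k d m) := by unfold pathCond; infer_instance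

lemma Nmap_pow_apply {n k : ℕ} (d : ℕ) (x : Fin n → ℂ) (j : Fin n) :
    ((Nmap n k ^ d) x) j =
      if h : pathCond n k d j.val then x ⟨j.val + d, by unfold pathCond at h; omega⟩ else 0 := by
  induction d generalizing x with
  | zero =>
    have h : pathCond n k 0 j.val := by unfold pathCond; omega
    simp [h]
  | succ d ih =>
    have : (Nmap n k ^ (d + 1)) x = (Nmap n k ^ d) (Nmap n k x) := by
      rw [pow_succ]; rfl
    rw [this, ih]
    by_cases h : pathCond n k d j.val
    · rw [dif_pos h, Nmap_apply]
      by_cases h2 : j.val + d + 1 < n ∧ j.val + d + 1 ≠ n - k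
      · have h3 : pathCond n k (d + 1) j.val := by
          unfold pathCond at h ⊢; omega
        rw [dif_pos h2, dif_pos h3]
        congr 1
      · have h3 : ¬ pathCond n k (d + 1) j.val := by
          unfold pathCond at h ⊢; omega
        rw [dif_neg h2, dif_neg h3]
    · have h3 : ¬ pathCond n k (d + 1) j.val := by
        unfold pathCond at h ⊢; omega
      rw [dif_neg h, dif_neg h3]

lemma map_pow_spanPQ {n k t b : ℕ} (d : ℕ) (ht : t ≤ n - k) (hb : b ≤ k) (hk : k ≤ n) :
    Submodule.map ((Nmap n k) ^ d) (spanPQ n k t b) = spanPQ n k (t - d) (b - d) := by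
  apply le_antisymm
  · rintro _ ⟨x, hx, rfl⟩
    rw [SetLike.mem_coe, mem_spanPQ] at hx
    rw [mem_spanPQ]
    intro j hj
    rw [Nmap_pow_apply]
    by_cases hp : pathCond n k d j.val
    · rw [dif_pos hp]
      apply hx
      unfold condPQ pathCond at *
      simp only [Fin.val_mk]
      omega
    · rw [dif_neg hp]
  · apply Submodule.span_le.2
    rintro _ ⟨j, hj, rfl⟩
    have hcond : condPQ n k (t - d) (b - d) j.val := hj
    have hjd : j.val + d < n := by
      unfold condPQ at hcond; omega
    rw [SetLike.mem_coe, Submodule.mem_map]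
    refine ⟨Pi.single ⟨j.val + d, hjd⟩ 1, ?_, ?_⟩
    · rw [mem_spanPQ]
      intro j' hj'
      have : j' ≠ ⟨j.val + d, hjd⟩ := by
        rintro rfl
        apply hj'
        unfold condPQ at hcond ⊢
        simp only [Fin.val_mk]
        omega
      exact Pi.single_eq_of_ne this 1
    · funext p
      rw [Nmap_pow_apply]
      by_cases hp : pathCond n k d p.val
      · rw [dif_pos hp]
        by_cases hpj : p = j
        · subst hpj
          simp [Pi.single_apply]
        · have h1 : (⟨p.val + d, by unfold pathCond at hp; omega⟩ : Fin n) ≠ ⟨j.val + d, hjd⟩ := by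
            simp only [ne_eq, Fin.mk.injEq]
            intro hcontra
            exact hpj (Fin.ext (by omega))
          rw [Pi.single_eq_of_ne h1, Pi.single_eq_of_ne (Ne.symm (by exact fun hh => hpj (Fin.ext (by rw [hh]))))]
      · rw [dif_neg hp]
        have hpj : p ≠ j := by
          rintro rfl
          apply hp
          unfold condPQ at hcond
          unfold pathCond
          omega
        rw [Pi.single_eq_of_ne (Ne.symm (by exact fun hh => hpj (Fin.ext (by rw [hh]))))]

lemma spanPQ_top {n k : ℕ} (hk : k ≤ n) : spanPQ n k (n - k) k = ⊤ := by
  apply eq_top_iff.2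
  intro x _
  rw [mem_spanPQ]
  intro j hj
  exfalso
  apply hj
  unfold condPQ
  have := j.isLt
  omega

lemma range_pow_Nmap {n k : ℕ} (r : ℕ) (hk : k ≤ n) :
    LinearMap.range ((Nmap n k) ^ r) = spanPQ n k (n - k - r) (k - r) := by
  rw [← Submodule.map_top, ← spanPQ_top hk, map_pow_spanPQ r (le_refl _) (le_refl _) hk]

lemma comap_pow_spanPQ {n k T B : ℕ} (d : ℕ) (hT : T ≤ n - k) (hB : B ≤ k) (hk : k ≤ n) :
    Submodule.comap ((Nmap n k) ^ d) (spanPQ n k T B) =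
      spanPQ n k (min (T + d) (n - k)) (min (B + d) k) := by
  apply le_antisymm
  · intro x hx
    rw [Submodule.mem_comap, mem_spanPQ] at hx
    rw [mem_spanPQ]
    intro j hj
    have hcond : ¬ condPQ n k (min (T + d) (n - k)) (min (B + d) k) j.val := hj
    -- j.val ≥ d in relevant cases; the constraint comes from position j.val - d
    have hjlt := j.isLt
    have hple : d ≤ j.val := by
      unfold condPQ at hcond
      by_contra hlt
      apply hcond
      omega
    have hpath : pathCond n k d (j.val - d) := by
      unfold condPQ at hcond
      unfold pathCond
      omega
    have hnc : ¬ condPQ n k T B (j.val - d) := by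
      unfold condPQ at hcond ⊢
      omega
    have h0 := hx ⟨j.val - d, by omega⟩ hnc
    rw [Nmap_pow_apply, dif_pos hpath] at h0
    have : x j = 0 := by
      convert h0 using 2
      exact Fin.ext (by simp only [Fin.val_mk]; omega)
    exact this
  · intro x hx
    rw [Submodule.mem_comap, mem_spanPQ]
    rw [mem_spanPQ] at hx
    intro j hj
    rw [Nmap_pow_apply]
    by_cases hp : pathCond n k d j.val
    · rw [dif_pos hp]
      apply hx
      unfold condPQ at hj ⊢
      unfold pathCond at hp
      simp only [Fin.val_mk]
      omega
    · rw [dif_neg hp]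

lemma spanPQ_eq_span_range {n k t b : ℕ} :
    spanPQ n k t b = Submodule.span ℂ (Set.range
      (fun j : {j : Fin n // condPQ n k t b j.val} => (Pi.single j.val 1 : Fin n → ℂ))) := by
  unfold spanPQ
  congr 1
  ext x
  constructor
  · rintro ⟨j, hj, rfl⟩; exact ⟨⟨j, hj⟩, rfl⟩
  · rintro ⟨⟨j, hj⟩, rfl⟩; exact ⟨j, hj, rfl⟩

lemma finrank_spanPQ {n k t b : ℕ} (hk : k ≤ n) (ht : t ≤ n - k) (hb : b ≤ k) :
    finrank ℂ (spanPQ n k t b) = t + b := by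
  rw [spanPQ_eq_span_range]
  have hli : LinearIndependent ℂ
      (fun j : {j : Fin n // condPQ n k t b j.val} => (Pi.single j.val 1 : Fin n → ℂ)) := by
    have hb' : LinearIndependent ℂ (fun j : Fin n => (Pi.single j 1 : Fin n → ℂ)) := by
      have := (Pi.basisFun ℂ (Fin n)).linearIndependent
      convert this using 1
      funext j
      simp [Pi.basisFun_apply]
    exact hb'.comp Subtype.val Subtype.val_injective
  rw [finrank_span_eq_card hli]
  rw [Fintype.card_subtype]
  -- count via the image under `Fin.val`
  have himg : (Finset.univ.filter fun j : Fin n => condPQ n k t b j.val).image Fin.val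
      = Finset.Ico 0 t ∪ Finset.Ico (n - k) (n - k + b) := by
    ext m
    simp only [Finset.mem_image, Finset.mem_filter, Finset.mem_union, Finset.mem_Ico,
      Finset.mem_univ, true_and]
    constructor
    · rintro ⟨j, hj, rfl⟩
      unfold condPQ at hj
      omega
    · intro hm
      have hmn : m < n := by omega
      exact ⟨⟨m, hmn⟩, by unfold condPQ; simp only [Fin.val_mk]; omega, rfl⟩
  have hcard := Finset.card_image_of_injective
    (Finset.univ.filter fun j : Fin n => condPQ n k t b j.val) (Fin.val_injective)
  rw [himg] at hcard
  rw [← hcard]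
  rw [Finset.card_union_of_disjoint]
  · rw [Nat.card_Ico, Nat.card_Ico]; omega
  · rw [Finset.disjoint_left]
    intro m hm1 hm2
    simp only [Finset.mem_Ico] at hm1 hm2
    omega

/-! ### tcount / bcount basics -/

lemma tcount_add_bcount {n : ℕ} (w : Fin n → Bool) {m : ℕ} (hm : m ≤ n) :
    tcount n w m + bcount n w m = m := by
  unfold tcount bcount
  rw [← Finset.card_union_of_disjoint]
  · have : (Finset.univ.filter fun j : Fin n => j.val < m ∧ w j = false) ∪
        (Finset.univ.filter fun j : Fin n => j.val < m ∧ w j = true)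
        = Finset.univ.filter fun j : Fin n => j.val < m := by
      ext j
      simp only [Finset.mem_union, Finset.mem_filter, Finset.mem_univ, true_and]
      rcases Bool.eq_false_or_eq_true (w j) with h | h <;> simp [h]
    rw [this]
    have himg : (Finset.univ.filter fun j : Fin n => j.val < m).image Fin.val
        = Finset.Ico 0 m := by
      ext a
      simp only [Finset.mem_image, Finset.mem_filter, Finset.mem_univ, true_and,
        Finset.mem_Ico]
      constructor
      · rintro ⟨j, hj, rfl⟩; omega
      · intro ha; exact ⟨⟨a, by omega⟩, by simp; omega, rfl⟩
    have hcard := Finset.card_image_of_injective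
      (Finset.univ.filter fun j : Fin n => j.val < m) (Fin.val_injective)
    rw [himg] at hcard
    rw [← hcard]
    simp [Nat.card_Ico]
  · rw [Finset.disjoint_left]
    intro j hj1 hj2
    simp only [Finset.mem_filter] at hj1 hj2
    rcases hj1 with ⟨-, -, h1⟩
    rcases hj2 with ⟨-, -, h2⟩
    rw [h1] at h2
    exact Bool.false_ne_true h2

lemma bcount_mono {n : ℕ} (w : Fin n → Bool) {m m' : ℕ} (h : m ≤ m') :
    bcount n w m ≤ bcount n w m' := by
  apply Finset.card_le_card
  intro j hj
  simp only [Finset.mem_filter] at hj ⊢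
  exact ⟨hj.1, by omega, hj.2.2⟩

lemma tcount_mono {n : ℕ} (w : Fin n → Bool) {m m' : ℕ} (h : m ≤ m') :
    tcount n w m ≤ tcount n w m' := by
  apply Finset.card_le_card
  intro j hj
  simp only [Finset.mem_filter] at hj ⊢
  exact ⟨hj.1, by omega, hj.2.2⟩

lemma bcount_succ {n : ℕ} (w : Fin n → Bool) {m : ℕ} (hm : m < n) :
    bcount n w (m + 1) = bcount n w m + (if w ⟨m, hm⟩ = true then 1 else 0) := by
  unfold bcount
  have : (Finset.univ.filter fun j : Fin n => j.val < m + 1 ∧ w j = true)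
      = (Finset.univ.filter fun j : Fin n => j.val < m ∧ w j = true) ∪
        (Finset.univ.filter fun j : Fin n => j = ⟨m, hm⟩ ∧ w j = true) := by
    ext j
    simp only [Finset.mem_union, Finset.mem_filter, Finset.mem_univ, true_and]
    constructor
    · rintro ⟨h1, h2⟩
      by_cases hjm : j.val < m
      · exact Or.inl ⟨hjm, h2⟩
      · exact Or.inr ⟨Fin.ext (by simp only [Fin.val_mk]; omega), h2⟩
    · rintro (⟨h1, h2⟩ | ⟨h1, h2⟩)
      · exact ⟨by omega, h2⟩
      · subst h1; exact ⟨by simp only [Fin.val_mk]; omega, h2⟩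
  rw [this, Finset.card_union_of_disjoint]
  · congr 1
    by_cases hw : w ⟨m, hm⟩ = true
    · rw [if_pos hw]
      rw [Finset.card_eq_one]
      refine ⟨⟨m, hm⟩, ?_⟩
      ext j
      simp only [Finset.mem_filter, Finset.mem_univ, true_and, Finset.mem_singleton]
      constructor
      · rintro ⟨rfl, -⟩; rfl
      · rintro rfl; exact ⟨rfl, hw⟩
    · rw [if_neg hw]
      rw [Finset.card_eq_zero]
      ext j
      simp only [Finset.mem_filter, Finset.mem_univ, true_and, Finset.notMem_empty,
        iff_false, not_and]
      rintro rfl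
      exact hw
  · rw [Finset.disjoint_left]
    intro j hj1 hj2
    simp only [Finset.mem_filter] at hj1 hj2
    have := hj2.2.1
    subst this
    simp only [Fin.val_mk] at hj1
    omega

lemma tcount_succ {n : ℕ} (w : Fin n → Bool) {m : ℕ} (hm : m < n) :
    tcount n w (m + 1) = tcount n w m + (if w ⟨m, hm⟩ = true then 0 else 1) := by
  have h1 := tcount_add_bcount w (m := m + 1) (by omega)
  have h2 := tcount_add_bcount w (m := m) (by omega)
  have h3 := bcount_succ w hm
  by_cases hw : w ⟨m, hm⟩ = true <;> simp [hw] at h3 ⊢ <;> omega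

lemma bcount_n {n k : ℕ} (w : Fin n → Bool) (hw : IsWeightSeq n k w) :
    bcount n w n = k := by
  unfold bcount
  unfold IsWeightSeq at hw
  rw [← hw]
  congr 1
  ext j
  simp [j.isLt]

lemma bcount_le {n k : ℕ} (w : Fin n → Bool) (hw : IsWeightSeq n k w) (m : ℕ) :
    bcount n w m ≤ k := by
  rcases le_or_gt m n with h | h
  · calc bcount n w m ≤ bcount n w n := bcount_mono w h
      _ = k := bcount_n w hw
  · have : bcount n w m = bcount n w n := by
      unfold bcount
      congr 1
      ext j
      simp only [Finset.mem_filter]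
      have := j.isLt
      constructor
      · rintro ⟨h1, h2, h3⟩; exact ⟨h1, by omega, h3⟩
      · rintro ⟨h1, h2, h3⟩; exact ⟨h1, by omega, h3⟩
    rw [this, bcount_n w hw]

lemma tcount_le {n k : ℕ} (w : Fin n → Bool) (hw : IsWeightSeq n k w) {m : ℕ} (hm : m ≤ n) :
    tcount n w m ≤ n - k := by
  have h1 := tcount_add_bcount w hm
  have h2 := tcount_add_bcount w (le_refl n)
  have h3 := bcount_n w hw
  have h4 := tcount_mono w hm
  omega

/-- Every point strictly inside a cup lies on a cup strictly inside it. -/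
lemma interiorCup {n : ℕ} (C : CrossinglessMatching n) {p : ℕ × ℕ} (hp : p ∈ C.cups)
    {m : ℕ} (hm1 : p.1 < m) (hm2 : m < p.2) :
    ∃ q ∈ C.cups, (m = q.1 ∨ m = q.2) ∧ p.1 < q.1 ∧ q.2 < p.2 := by
  obtain ⟨q, hq, hqe⟩ := C.rays_outside p hp m hm1 hm2
  have hpr := C.mem_range p hp
  have hqr := C.mem_range q hq
  have hqp : q ≠ p := by rintro rfl; omega
  have hd := C.disjoint' q hq p hp hqp
  have hnc1 := C.noncross p hp q hq
  have hnc2 := C.noncross q hq p hp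
  refine ⟨q, hq, hqe, ?_, ?_⟩
  · by_contra hcon
    -- q.1 < p.1 ; then m = q.2 is inside p, and q crosses p
    exact hnc2 (by omega)
  · by_contra hcon
    exact hnc1 (by omega)

/-- If the region `(a, c]` is self-matched and all its cups carry opposite labels,
then the height function of `w` takes the same value at `a` and `c`. -/
lemma heightEq_selfmatched {n : ℕ} (C : CrossinglessMatching n) (w : Fin n → Bool) :
    ∀ D a c : ℕ, c - a ≤ D → a ≤ c → c ≤ n →
    (∀ p ∈ C.cups, a < p.1 → p.2 ≤ c → ∀ (h1 : p.1 - 1 < n) (h2 : p.2 - 1 < n),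
      w ⟨p.1 - 1, h1⟩ ≠ w ⟨p.2 - 1, h2⟩) →
    (∀ m, a < m → m ≤ c → ∃ p ∈ C.cups, (m = p.1 ∨ m = p.2) ∧ a < p.1 ∧ p.2 ≤ c) →
    tcount n w c + bcount n w a = tcount n w a + bcount n w c := by
  intro D
  induction D with
  | zero =>
    intro a c h1 h2 h3 _ _
    have : a = c := by omega
    subst this; ring
  | succ D ih =>
    intro a c hD hac hcn hopp hsm
    rcases Nat.eq_or_lt_of_le hac with rfl | hlt
    · ring
    obtain ⟨p, hp, hpe, hpa, hpc⟩ := hsm (a + 1) (by omega) (by omega)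
    obtain ⟨hp1, hp12, hp2n⟩ := C.mem_range p hp
    have hpa1 : p.1 = a + 1 := by rcases hpe with h | h <;> omega
    have hj1 : a + 1 < p.2 := by omega
    -- subregion (a+1, p.2-1]
    have E1 : tcount n w (p.2 - 1) + bcount n w (a + 1) =
        tcount n w (a + 1) + bcount n w (p.2 - 1) := by
      apply ih (a + 1) (p.2 - 1) (by omega) (by omega) (by omega)
      · intro q hq hq1 hq2 g1 g2
        exact hopp q hq (by omega) (by omega) g1 g2
      · intro m hm1 hm2
        obtain ⟨q, hq, hqe, hqa, hqc⟩ := hsm m (by omega) (by omega)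
        have hqp : q ≠ p := by rintro rfl; omega
        have hd := C.disjoint' q hq p hp hqp
        obtain ⟨hq1, hq12, hq2n⟩ := C.mem_range q hq
        refine ⟨q, hq, hqe, by omega, ?_⟩
        by_contra hcon
        have hmq1 : m = q.1 := by omega
        exact C.noncross p hp q hq (by omega)
    -- subregion (p.2, c]
    have E2 : tcount n w c + bcount n w p.2 = tcount n w p.2 + bcount n w c := by
      apply ih p.2 c (by omega) (by omega) (by omega)
      · intro q hq hq1 hq2 g1 g2
        exact hopp q hq (by omega) (by omega) g1 g2
      · intro m hm1 hm2
        obtain ⟨q, hq, hqe, hqa, hqc⟩ := hsm m (by omega) (by omega)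
        have hqp : q ≠ p := by rintro rfl; omega
        have hd := C.disjoint' q hq p hp hqp
        obtain ⟨hq1, hq12, hq2n⟩ := C.mem_range q hq
        refine ⟨q, hq, hqe, ?_, hqc⟩
        by_contra hcon
        have hmq2 : m = q.2 := by omega
        exact C.noncross p hp q hq (by omega)
    -- border steps
    have han : a < n := by omega
    have hj'n : p.2 - 1 < n := by omega
    have s1 := tcount_succ w han
    have s2 := bcount_succ w han
    have s3 := tcount_succ w hj'n
    have s4 := bcount_succ w hj'n
    have e2 : p.2 - 1 + 1 = p.2 := by omega
    rw [e2] at s3 s4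
    have hne := hopp p hp (by omega) hpc (by omega) (by omega)
    have hfin : (⟨p.1 - 1, by omega⟩ : Fin n) = ⟨a, han⟩ := Fin.ext (by simp; omega)
    rw [hfin] at hne
    cases hwa : w ⟨a, han⟩ <;> cases hwb : w ⟨p.2 - 1, hj'n⟩ <;>
      rw [hwa] at s1 s2 hne <;> rw [hwb] at s3 s4 hne
    · simp only [Bool.false_eq_true, if_false, if_true] at s1 s2 s3 s4
      exact absurd rfl hne
    · simp only [Bool.false_eq_true, if_false, if_true] at s1 s2 s3 s4
      omega
    · simp only [Bool.false_eq_true, if_false, if_true] at s1 s2 s3 s4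
      omega
    · simp only [Bool.false_eq_true, if_false, if_true] at s1 s2 s3 s4
      exact absurd rfl hne

/-- If every cup of `C` satisfies the height equation, then `w` puts opposite labels
on the endpoints of every cup. -/
lemma opp_of_cupHeightEq {n : ℕ} (C : CrossinglessMatching n) (w : Fin n → Bool)
    (hhe : ∀ p ∈ C.cups, tcount n w p.2 + bcount n w (p.1 - 1) =
      tcount n w (p.1 - 1) + bcount n w p.2) :
    ∀ W : ℕ, ∀ p ∈ C.cups, p.2 - p.1 ≤ W → ∀ (h1 : p.1 - 1 < n) (h2 : p.2 - 1 < n),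
      w ⟨p.1 - 1, h1⟩ ≠ w ⟨p.2 - 1, h2⟩ := by
  intro W
  induction W with
  | zero =>
    intro p hp hW h1 h2
    exfalso
    have := C.mem_range p hp
    omega
  | succ W ih =>
    intro p hp hW h1 h2
    have hpr := C.mem_range p hp
    have E1 : tcount n w (p.2 - 1) + bcount n w p.1 =
        tcount n w p.1 + bcount n w (p.2 - 1) := by
      by_cases heq : p.2 = p.1 + 1
      · have h21 : p.2 - 1 = p.1 := by omega
        rw [h21]
      · apply heightEq_selfmatched C w (p.2 - 1 - p.1) p.1 (p.2 - 1) le_rfl (by omega) (by omega)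
        · intro q hq hq1 hq2 g1 g2
          exact ih q hq (by have := C.mem_range q hq; omega) g1 g2
        · intro m hm1 hm2
          obtain ⟨q, hq, hqe, hqa, hqc⟩ := interiorCup C hp hm1 (by omega)
          exact ⟨q, hq, hqe, hqa, by omega⟩
    have E0 := hhe p hp
    have s1 := tcount_succ w h1
    have s2 := bcount_succ w h1
    have e1 : p.1 - 1 + 1 = p.1 := by omega
    rw [e1] at s1 s2
    have s3 := tcount_succ w h2
    have s4 := bcount_succ w h2
    have e2 : p.2 - 1 + 1 = p.2 := by omega
    rw [e2] at s3 s4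
    intro heq
    cases hwa : w ⟨p.1 - 1, h1⟩ <;> cases hwb : w ⟨p.2 - 1, h2⟩ <;>
      rw [hwa] at s1 s2 heq <;> rw [hwb] at s3 s4 heq <;>
      simp only [Bool.false_eq_true, Bool.true_eq_false, if_false, if_true] at s1 s2 s3 s4 heq <;>
      omega

/-- If `w` puts opposite labels on every cup, every cup satisfies the height equation. -/
lemma heightEq_of_opp {n : ℕ} (C : CrossinglessMatching n) (w : Fin n → Bool)
    (hopp : ∀ p ∈ C.cups, ∀ (h1 : p.1 - 1 < n) (h2 : p.2 - 1 < n),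
      w ⟨p.1 - 1, h1⟩ ≠ w ⟨p.2 - 1, h2⟩) :
    ∀ p ∈ C.cups, tcount n w p.2 + bcount n w (p.1 - 1) =
      tcount n w (p.1 - 1) + bcount n w p.2 := by
  intro p hp
  have hpr := C.mem_range p hp
  apply heightEq_selfmatched C w (p.2 - (p.1 - 1)) (p.1 - 1) p.2 le_rfl (by omega) (by omega)
  · intro q hq _ _ g1 g2
    exact hopp q hq g1 g2
  · intro m hm1 hm2
    by_cases hmp1 : m = p.1
    · exact ⟨p, hp, Or.inl hmp1, by omega, le_rfl⟩
    by_cases hmp2 : m = p.2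
    · exact ⟨p, hp, Or.inr hmp2, by omega, le_rfl⟩
    obtain ⟨q, hq, hqe, hqa, hqc⟩ := interiorCup C hp (show p.1 < m by omega) (by omega)
    exact ⟨q, hq, hqe, by omega, by omega⟩

/-- The label of `w` at the 1-based point `m`. -/
def wAt (n : ℕ) (w : Fin n → Bool) (m : ℕ) : Bool :=
  if h : m - 1 < n then w ⟨m - 1, h⟩ else false

/-- For an oriented matching, `bcount` at an unmatched point counts the cups to its left. -/
lemma bcount_ray {n : ℕ} (C : CrossinglessMatching n) (w : Fin n → Bool)
    (hopp : ∀ p ∈ C.cups, ∀ (h1 : p.1 - 1 < n) (h2 : p.2 - 1 < n),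
      w ⟨p.1 - 1, h1⟩ ≠ w ⟨p.2 - 1, h2⟩)
    (hray : ∀ m : ℕ, 1 ≤ m → m ≤ n → ¬ Matched n C m → ∀ h : m - 1 < n, w ⟨m - 1, h⟩ = false)
    {m : ℕ} (hmn : m ≤ n) (hum : ¬ Matched n C m) :
    bcount n w m = (C.cups.filter fun p => p.2 ≤ m).card := by
  classical
  have hinj : Function.Injective (fun j : Fin n => j.val + 1) := by
    intro a b h
    have h' : a.val + 1 = b.val + 1 := h
    exact Fin.val_injective (by omega)
  have hA := Finset.card_image_of_injective
    (Finset.univ.filter fun j : Fin n => j.val < m ∧ w j = true) hinj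
  have hBinj : Set.InjOn (fun p : ℕ × ℕ => if wAt n w p.1 = true then p.1 else p.2)
      (C.cups.filter fun p => p.2 ≤ m) := by
    intro p hp q hq hpq
    simp only [Finset.coe_filter, Set.mem_setOf_eq] at hp hq
    by_contra hne
    have hd := C.disjoint' p hp.1 q hq.1 hne
    simp only at hpq
    split_ifs at hpq <;> omega
  have hB := Finset.card_image_of_injOn hBinj
  have himg : (Finset.univ.filter fun j : Fin n => j.val < m ∧ w j = true).image
        (fun j : Fin n => j.val + 1)
      = (C.cups.filter fun p => p.2 ≤ m).image
        (fun p : ℕ × ℕ => if wAt n w p.1 = true then p.1 else p.2) := by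
    ext u
    simp only [Finset.mem_image, Finset.mem_filter, Finset.mem_univ, true_and]
    constructor
    · rintro ⟨j, ⟨hjm, hjw⟩, rfl⟩
      have hj1n : j.val + 1 ≤ n := by omega
      have hmatched : Matched n C (j.val + 1) := by
        by_contra hun
        have := hray (j.val + 1) (by omega) hj1n hun (by have := j.isLt; omega)
        have hj : (⟨j.val + 1 - 1, by omega⟩ : Fin n) = j := Fin.ext (by simp only [Fin.val_mk]; omega)
        rw [hj] at this
        rw [this] at hjw
        exact Bool.false_ne_true hjw
      obtain ⟨q, hq, hqe⟩ := hmatched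
      obtain ⟨hq1, hq12, hq2n⟩ := C.mem_range q hq
      have hult : j.val + 1 < m := by
        rcases Nat.lt_or_ge (j.val + 1) m with h | h
        · exact h
        · exfalso
          have : j.val + 1 = m := by omega
          rw [this] at hqe
          exact hum ⟨q, hq, hqe⟩
      have hq2m : q.2 ≤ m := by
        by_contra hcon
        have hq2m' : m < q.2 := by omega
        have hq1m : q.1 < m := by rcases hqe with h | h <;> omega
        exact hum (C.rays_outside q hq m hq1m hq2m')
      refine ⟨q, ⟨hq, hq2m⟩, ?_⟩
      rcases hqe with h | h
      · have hwq1 : wAt n w q.1 = true := by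
          unfold wAt
          rw [dif_pos (show q.1 - 1 < n by omega)]
          have : (⟨q.1 - 1, by omega⟩ : Fin n) = j := Fin.ext (by simp only [Fin.val_mk]; omega)
          rw [this]; exact hjw
        rw [if_pos hwq1]; omega
      · have hwq2 : w ⟨q.2 - 1, by omega⟩ = true := by
          have : (⟨q.2 - 1, by omega⟩ : Fin n) = j := Fin.ext (by simp only [Fin.val_mk]; omega)
          rw [this]; exact hjw
        have hwq1 : ¬ wAt n w q.1 = true := by
          unfold wAt
          rw [dif_pos (show q.1 - 1 < n by omega)]
          intro hcon
          exact hopp q hq (by omega) (by omega) (by rw [hcon, hwq2])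
        rw [if_neg hwq1]; omega
    · rintro ⟨q, ⟨hq, hq2m⟩, rfl⟩
      obtain ⟨hq1, hq12, hq2n⟩ := C.mem_range q hq
      by_cases c1 : wAt n w q.1 = true
      · rw [if_pos c1]
        refine ⟨⟨q.1 - 1, by omega⟩, ⟨by simp only [Fin.val_mk]; omega, ?_⟩, by simp only [Fin.val_mk]; omega⟩
        unfold wAt at c1
        rw [dif_pos (show q.1 - 1 < n by omega)] at c1
        exact c1
      · rw [if_neg c1]
        unfold wAt at c1
        rw [dif_pos (show q.1 - 1 < n by omega)] at c1
        have hfalse : w ⟨q.1 - 1, by omega⟩ = false := by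
          cases h : w ⟨q.1 - 1, by omega⟩
          · rfl
          · exact absurd h c1
        have htrue : w ⟨q.2 - 1, by omega⟩ = true := by
          have := hopp q hq (by omega) (by omega)
          cases h : w ⟨q.2 - 1, by omega⟩
          · exfalso; apply this; rw [hfalse, h]
          · rfl
        exact ⟨⟨q.2 - 1, by omega⟩, ⟨by simp only [Fin.val_mk]; omega, htrue⟩, by simp only [Fin.val_mk]; omega⟩
  unfold bcount
  rw [← hA, himg, hB]

lemma tabWeight_true_iff {n k : ℕ} (S : StandardTableau n k) (C : CrossinglessMatching n)
    (hC : IsMatchOf n k S C) (j : Fin n) :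
    tabWeight n k S j = true ↔ ∃ p ∈ C.cups, p.1 = j.val + 1 := by
  unfold tabWeight
  rw [decide_eq_true_eq]
  exact ⟨fun h => (hC.2 _).2 h, fun h => (hC.2 _).1 h⟩

lemma tabWeight_opp {n k : ℕ} (S : StandardTableau n k) (C : CrossinglessMatching n)
    (hC : IsMatchOf n k S C) :
    ∀ p ∈ C.cups, ∀ (h1 : p.1 - 1 < n) (h2 : p.2 - 1 < n),
      tabWeight n k S ⟨p.1 - 1, h1⟩ ≠ tabWeight n k S ⟨p.2 - 1, h2⟩ := by
  intro p hp h1 h2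
  have hpr := C.mem_range p hp
  have htrue : tabWeight n k S ⟨p.1 - 1, h1⟩ = true := by
    rw [tabWeight_true_iff S C hC]
    exact ⟨p, hp, by simp only [Fin.val_mk]; omega⟩
  have hfalse : tabWeight n k S ⟨p.2 - 1, h2⟩ = false := by
    rw [Bool.eq_false_iff]
    intro hcon
    rw [tabWeight_true_iff S C hC] at hcon
    obtain ⟨q, hq, hq1⟩ := hcon
    simp only [Fin.val_mk] at hq1
    have hq1' : q.1 = p.2 := by omega
    by_cases hqp : q = p
    · subst hqp; omega
    · have hd := C.disjoint' q hq p hp hqp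
      omega
  rw [htrue, hfalse]
  simp

lemma tabWeight_ray {n k : ℕ} (S : StandardTableau n k) (C : CrossinglessMatching n)
    (hC : IsMatchOf n k S C) :
    ∀ m : ℕ, 1 ≤ m → m ≤ n → ¬ Matched n C m → ∀ h : m - 1 < n,
      tabWeight n k S ⟨m - 1, h⟩ = false := by
  intro m hm1 hmn hum h
  rw [Bool.eq_false_iff]
  intro hcon
  rw [tabWeight_true_iff S C hC] at hcon
  obtain ⟨q, hq, hq1⟩ := hcon
  simp only [Fin.val_mk] at hq1
  exact hum ⟨q, hq, Or.inl (by omega)⟩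

lemma tabWeight_isWeightSeq {n k : ℕ} (S : StandardTableau n k) (C : CrossinglessMatching n)
    (hC : IsMatchOf n k S C) : IsWeightSeq n k (tabWeight n k S) := by
  classical
  unfold IsWeightSeq
  have hinj : Function.Injective (fun j : Fin n => j.val + 1) := by
    intro a b h
    have h' : a.val + 1 = b.val + 1 := h
    exact Fin.val_injective (by omega)
  have hA := Finset.card_image_of_injective
    (Finset.univ.filter fun j : Fin n => tabWeight n k S j = true) hinj
  have hBinj : Set.InjOn (fun p : ℕ × ℕ => p.1) (C.cups : Set (ℕ × ℕ)) := by
    intro p hp q hq hpq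
    by_contra hne
    have hd := C.disjoint' p hp q hq hne
    simp only at hpq
    omega
  have hB := Finset.card_image_of_injOn hBinj
  have himg : (Finset.univ.filter fun j : Fin n => tabWeight n k S j = true).image
        (fun j : Fin n => j.val + 1) = C.cups.image (fun p : ℕ × ℕ => p.1) := by
    ext u
    simp only [Finset.mem_image, Finset.mem_filter, Finset.mem_univ, true_and]
    constructor
    · rintro ⟨j, hj, rfl⟩
      obtain ⟨p, hp, hp1⟩ := (tabWeight_true_iff S C hC j).1 hj
      exact ⟨p, hp, hp1⟩
    · rintro ⟨p, hp, rfl⟩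
      have hpr := C.mem_range p hp
      refine ⟨⟨p.1 - 1, by omega⟩, ?_, by simp only [Fin.val_mk]; omega⟩
      rw [tabWeight_true_iff S C hC]
      exact ⟨p, hp, by simp only [Fin.val_mk]; omega⟩
  rw [← hA, himg, hB]
  exact hC.1

/-- Twice the number of cups inside an interval is at most its length. -/
lemma two_mul_card_cups_le {n : ℕ} (C : CrossinglessMatching n) (M : Finset (ℕ × ℕ))
    (hM : M ⊆ C.cups) {lo hi : ℕ} (hlo : ∀ p ∈ M, lo ≤ p.1) (hhi : ∀ p ∈ M, p.2 ≤ hi)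
    (h1 : 1 ≤ lo) :
    2 * M.card ≤ hi + 1 - lo := by
  classical
  have hdisj : ∀ p ∈ M, ∀ q ∈ M, p ≠ q →
      Disjoint ({p.1, p.2} : Finset ℕ) ({q.1, q.2} : Finset ℕ) := by
    intro p hp q hq hpq
    have hd := C.disjoint' p (hM hp) q (hM hq) hpq
    rw [Finset.disjoint_left]
    intro u hu1 hu2
    simp only [Finset.mem_insert, Finset.mem_singleton] at hu1 hu2
    omega
  have hcard := Finset.card_biUnion hdisj
  have hsum : ∑ p ∈ M, ({p.1, p.2} : Finset ℕ).card = 2 * M.card := by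
    rw [Finset.sum_congr rfl (fun p hp => ?_), Finset.sum_const, smul_eq_mul, mul_comm]
    have hpr := C.mem_range p (hM hp)
    exact Finset.card_pair (by omega)
  have hsub : (M.biUnion fun p => ({p.1, p.2} : Finset ℕ)) ⊆ Finset.Icc lo hi := by
    intro u hu
    rw [Finset.mem_biUnion] at hu
    obtain ⟨p, hp, hu⟩ := hu
    simp only [Finset.mem_insert, Finset.mem_singleton] at hu
    have hpr := C.mem_range p (hM hp)
    have := hlo p hp
    have := hhi p hp
    rw [Finset.mem_Icc]
    omega
  have := Finset.card_le_card hsub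
  rw [hcard, hsum] at this
  rw [Nat.card_Icc] at this
  omega

/-- The arithmetic inequalities at an unmatched point. -/
lemma ray_count_ineq {n k : ℕ} (C : CrossinglessMatching n) (hcups : C.cups.card = k)
    {m : ℕ} (hmn : m ≤ n) (hum : ¬ Matched n C m) (hm1 : 1 ≤ m) :
    2 * (C.cups.filter fun p => p.2 ≤ m).card ≤ m ∧
      m + 2 * k ≤ n + 2 * (C.cups.filter fun p => p.2 ≤ m).card := by
  classical
  have h1 : 2 * (C.cups.filter fun p => p.2 ≤ m).card ≤ m := by
    have := two_mul_card_cups_le C (C.cups.filter fun p => p.2 ≤ m)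
      (Finset.filter_subset _ _) (lo := 1) (hi := m) ?_ ?_ le_rfl
    · omega
    · intro p hp
      exact (C.mem_range p (Finset.mem_of_mem_filter p hp)).1
    · intro p hp
      exact (Finset.mem_filter.1 hp).2
  refine ⟨h1, ?_⟩
  have h2 : 2 * (C.cups.filter fun p => ¬ p.2 ≤ m).card ≤ n - m := by
    have := two_mul_card_cups_le C (C.cups.filter fun p => ¬ p.2 ≤ m)
      (Finset.filter_subset _ _) (lo := m + 1) (hi := n) ?_ ?_ (by omega)
    · omega
    · intro p hp
      rw [Finset.mem_filter] at hp
      obtain ⟨hp, hp2⟩ := hp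
      have hpr := C.mem_range p hp
      by_contra hcon
      -- p.1 ≤ m < p.2
      by_cases hp1m : p.1 = m
      · exact hum ⟨p, hp, Or.inl hp1m.symm⟩
      · by_cases hp2m : p.2 = m
        · exact hum ⟨p, hp, Or.inr hp2m.symm⟩
        · exact hum (C.rays_outside p hp m (by omega) (by omega))
    · intro p hp
      exact (C.mem_range p (Finset.mem_of_mem_filter p hp)).2.2
  have h3 := Finset.card_filter_add_card_filter_not (s := C.cups)
    (p := fun p : ℕ × ℕ => p.2 ≤ m)
  rw [hcups] at h3
  omega

/-- The cup condition for `Φ(w)` is equivalent to the height equation. -/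
lemma cup_mapEq_iff {n k : ℕ} (hkn : 2 * k ≤ n) (w : Fin n → Bool) (hw : IsWeightSeq n k w)
    {p : ℕ × ℕ} (h1 : 1 ≤ p.1) (h12 : p.1 < p.2) (h2n : p.2 ≤ n) :
    Submodule.map ((Nmap n k) ^ ((p.2 - p.1 + 1) / 2))
        (spanPQ n k (tcount n w p.2) (bcount n w p.2))
      = spanPQ n k (tcount n w (p.1 - 1)) (bcount n w (p.1 - 1)) ↔
    tcount n w p.2 + bcount n w (p.1 - 1) = tcount n w (p.1 - 1) + bcount n w p.2 := by
  have hk : k ≤ n := by omega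
  have ht2 := tcount_le w hw h2n
  have hb2 := bcount_le w hw p.2
  have ht1 := tcount_le w hw (show p.1 - 1 ≤ n by omega)
  have hb1 := bcount_le w hw (p.1 - 1)
  have hs2 := tcount_add_bcount w h2n
  have hs1 := tcount_add_bcount w (show p.1 - 1 ≤ n by omega)
  have hmt := tcount_mono w (show p.1 - 1 ≤ p.2 by omega)
  have hmb := bcount_mono w (show p.1 - 1 ≤ p.2 by omega)
  rw [map_pow_spanPQ _ ht2 hb2 hk, spanPQ_eq_iff (by omega) (by omega) hk ht1 hb1]
  omega

lemma phiFlag_isNFlag {n k : ℕ} (hkn : 2 * k ≤ n) (w : Fin n → Bool)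
    (hw : IsWeightSeq n k w) : IsNFlag n k (PhiFlag n k w) := by
  have hk : k ≤ n := by omega
  refine ⟨?_, ?_, ?_⟩
  · intro i j hij
    exact spanPQ_mono (tcount_mono w hij) (bcount_mono w hij)
  · intro i
    have hi : i.val ≤ n := by omega
    rw [show PhiFlag n k w i = spanPQ n k (tcount n w i.val) (bcount n w i.val) from rfl,
      finrank_spanPQ hk (tcount_le w hw hi) (bcount_le w hw i.val)]
    exact tcount_add_bcount w hi
  · intro i
    have hilt : i.val < n := i.isLt
    have hmap : Submodule.map (Nmap n k) (PhiFlag n k w i.succ) =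
        spanPQ n k (tcount n w (i.val + 1) - 1) (bcount n w (i.val + 1) - 1) := by
      have h1 : Nmap n k = (Nmap n k) ^ 1 := (pow_one _).symm
      rw [show PhiFlag n k w i.succ
          = spanPQ n k (tcount n w (i.val + 1)) (bcount n w (i.val + 1)) from rfl, h1]
      exact map_pow_spanPQ 1 (tcount_le w hw (by omega)) (bcount_le w hw _) hk
    rw [show PhiFlag n k w i.castSucc
        = spanPQ n k (tcount n w i.val) (bcount n w i.val) from rfl, hmap]
    have s1 := tcount_succ w hilt
    have s2 := bcount_succ w hilt
    cases hwi : w ⟨i.val, hilt⟩ <;>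
      rw [hwi] at s1 s2 <;>
      simp only [Bool.false_eq_true, if_true, if_false] at s1 s2 <;>
      exact spanPQ_mono (by omega) (by omega)

/-- For a standard tableau `S` with matching `m(S) = C`, the fixed flag
`Φ(w)` lies in the component `Y_S` if and only if `w` orients `m(S)`. -/
theorem fixed_point_in_component_iff (n k : ℕ) (hn : 1 ≤ n) (hkn : 2 * k ≤ n)
    (S : StandardTableau n k) (C : CrossinglessMatching n) (hC : IsMatchOf n k S C)
    (w : Fin n → Bool) (hw : IsWeightSeq n k w) :
    InYS n k S C (PhiFlag n k w) ↔ OrientsMatching n w C := by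
  classical
  have hk : k ≤ n := by omega
  constructor
  · rintro ⟨hflag, hcup, hray⟩
    have hopp : ∀ p ∈ C.cups, ∀ (h1 : p.1 - 1 < n) (h2 : p.2 - 1 < n),
        w ⟨p.1 - 1, h1⟩ ≠ w ⟨p.2 - 1, h2⟩ := by
      have hhe : ∀ p ∈ C.cups, tcount n w p.2 + bcount n w (p.1 - 1) =
          tcount n w (p.1 - 1) + bcount n w p.2 := by
        intro p hp
        have hpr := C.mem_range p hp
        have hc := hcup p hp (by omega) (by omega)
        rw [← cup_mapEq_iff hkn w hw (by omega) (by omega) (by omega)]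
        exact hc
      intro p hp h1 h2
      exact opp_of_cupHeightEq C w hhe n p hp (by have := C.mem_range p hp; omega) h1 h2
    refine ⟨hopp, ?_⟩
    intro m hm1 hmn hum h
    by_contra hcon
    have htw : w ⟨m - 1, h⟩ = true := by
      cases h' : w ⟨m - 1, h⟩
      · exact absurd h' hcon
      · rfl
    have hinj : Function.Injective (fun j : Fin n => j.val + 1) := by
      intro a b hab
      have h' : a.val + 1 = b.val + 1 := hab
      exact Fin.val_injective (by omega)
    have hTinj : Set.InjOn (fun p : ℕ × ℕ => if wAt n w p.1 = true then p.1 else p.2)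
        (C.cups : Set (ℕ × ℕ)) := by
      intro p hp q hq hpq
      by_contra hne
      have hd := C.disjoint' p hp q hq hne
      simp only at hpq
      split_ifs at hpq <;> omega
    have hTcard : (C.cups.image
        (fun p : ℕ × ℕ => if wAt n w p.1 = true then p.1 else p.2)).card = k := by
      rw [Finset.card_image_of_injOn hTinj, hC.1]
    have hVcard : ((Finset.univ.filter fun j : Fin n => w j = true).image
        (fun j : Fin n => j.val + 1)).card = k := by
      rw [Finset.card_image_of_injective _ hinj]
      exact hw
    have hsub : C.cups.image (fun p : ℕ × ℕ => if wAt n w p.1 = true then p.1 else p.2)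
        ⊆ (Finset.univ.filter fun j : Fin n => w j = true).image
          (fun j : Fin n => j.val + 1) := by
      intro u hu
      rw [Finset.mem_image] at hu
      obtain ⟨p, hp, rfl⟩ := hu
      have hpr := C.mem_range p hp
      rw [Finset.mem_image]
      by_cases c1 : wAt n w p.1 = true
      · rw [if_pos c1]
        unfold wAt at c1
        rw [dif_pos (show p.1 - 1 < n by omega)] at c1
        refine ⟨⟨p.1 - 1, by omega⟩, ?_, by simp only [Fin.val_mk]; omega⟩
        rw [Finset.mem_filter]
        exact ⟨Finset.mem_univ _, c1⟩
      · rw [if_neg c1]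
        unfold wAt at c1
        rw [dif_pos (show p.1 - 1 < n by omega)] at c1
        have hfalse : w ⟨p.1 - 1, by omega⟩ = false := by
          cases h' : w ⟨p.1 - 1, by omega⟩
          · rfl
          · exact absurd h' c1
        have htrue : w ⟨p.2 - 1, by omega⟩ = true := by
          have := hopp p hp (by omega) (by omega)
          cases h' : w ⟨p.2 - 1, by omega⟩
          · exfalso; apply this; rw [hfalse, h']
          · rfl
        refine ⟨⟨p.2 - 1, by omega⟩, ?_, by simp only [Fin.val_mk]; omega⟩
        rw [Finset.mem_filter]
        exact ⟨Finset.mem_univ _, htrue⟩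
    have heq := Finset.eq_of_subset_of_card_le hsub (by rw [hTcard, hVcard])
    have hmem : m ∈ (Finset.univ.filter fun j : Fin n => w j = true).image
        (fun j : Fin n => j.val + 1) := by
      rw [Finset.mem_image]
      refine ⟨⟨m - 1, h⟩, ?_, by simp only [Fin.val_mk]; omega⟩
      rw [Finset.mem_filter]
      exact ⟨Finset.mem_univ _, htw⟩
    rw [← heq, Finset.mem_image] at hmem
    obtain ⟨p, hp, hpe⟩ := hmem
    apply hum
    refine ⟨p, hp, ?_⟩
    by_cases c1 : wAt n w p.1 = true
    · rw [if_pos c1] at hpe; exact Or.inl hpe.symm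
    · rw [if_neg c1] at hpe; exact Or.inr hpe.symm
  · rintro ⟨hopp, hray⟩
    refine ⟨phiFlag_isNFlag hkn w hw, ?_, ?_⟩
    · intro p hp hp1 hp2
      have hpr := C.mem_range p hp
      have hhe := heightEq_of_opp C w hopp p hp
      exact (cup_mapEq_iff hkn w hw (by omega) (by omega) (by omega)).2 hhe
    · intro m hm1 hm hum
      have hmn : m ≤ n := by omega
      have hvw : IsWeightSeq n k (tabWeight n k S) := tabWeight_isWeightSeq S C hC
      have hvopp := tabWeight_opp S C hC
      have hvray := tabWeight_ray S C hC
      have hbv := bcount_ray C (tabWeight n k S) hvopp hvray hmn hum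
      have hbw := bcount_ray C w hopp hray hmn hum
      have hineq := ray_count_ineq C hC.1 hmn hum hm1
      have hsv := tcount_add_bcount (tabWeight n k S) hmn
      have hsw := tcount_add_bcount w hmn
      have htv := tcount_le (tabWeight n k S) hvw hmn
      have hbv' := bcount_le (tabWeight n k S) hvw m
      have htw' := tcount_le w hw hmn
      have hbw' := bcount_le w hw m
      rw [range_pow_Nmap _ hk,
        comap_pow_spanPQ _ (Nat.sub_le _ _) (Nat.sub_le _ _) hk]
      rw [show PhiFlag n k w ⟨m, hm⟩ = spanPQ n k (tcount n w m) (bcount n w m) from rfl]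
      rw [spanPQ_eq_iff htw' hbw' hk (le_trans (min_le_right _ _) le_rfl)
        (min_le_right _ _)]
      omega

end Springer
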